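/- For the lower-bound estimate L(x) = max over rows of L_i(x) (where L_i(x) = C if the bucket's key equals x, else 0), it holds that L(x) ≤ S(x), and moreover S(x) − L(x) ≤ εS with probability at least 1 − δ. -/

import Mathlib

/-- State of a bucket in MV-Sketch: total value `V`, candidate key `K`,
indicator counter `C`. -/
structure Bucket (α : Type*) where
  V : ℝ
  K : α
  C : ℝ

/-- One update of the generalized majority vote algorithm on input `(y, v)`. -/
noncomputable def Bucket.step {α : Type*} [DecidableEq α] (b : Bucket α) (p : α × ℝ) :
    Bucket α :=
  if p.1 = b.K then ⟨b.V + p.2, b.K, b.C + p.2⟩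
  else if b.C - p.2 < 0 then ⟨b.V + p.2, p.1, p.2 - b.C⟩
  else ⟨b.V + p.2, b.K, b.C - p.2⟩

/-- State of the bucket after processing the whole stream `l`, starting from
an arbitrary initial key `k0`, `V = 0`, `C = 0`. -/
noncomputable def runBucket {α : Type*} [DecidableEq α] (k0 : α) (l : List (α × ℝ)) :
    Bucket α :=
  l.foldl Bucket.step ⟨0, k0, 0⟩

/-- Total value of flow `x` in the stream `l`. -/
def flowSum {α : Type*} [DecidableEq α] (x : α) (l : List (α × ℝ)) : ℝ :=
  ((l.filter fun p => p.1 = x).map Prod.snd).sum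

open MeasureTheory ProbabilityTheory

open ENNReal

namespace MVAux

variable {α : Type*} [DecidableEq α]

lemma flowSum_nil (x : α) : flowSum x ([] : List (α × ℝ)) = 0 := rfl

lemma flowSum_cons (x : α) (p : α × ℝ) (t : List (α × ℝ)) :
    flowSum x (p :: t) = (if p.1 = x then p.2 else 0) + flowSum x t := by
  by_cases h : p.1 = x <;> simp [flowSum, List.filter_cons, h]

structure Inv (b : Bucket α) (S : α → ℝ) (T : ℝ) : Prop where
  hC : 0 ≤ b.C
  hSnn : ∀ y, 0 ≤ S y
  hKC : b.C ≤ S b.K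
  hMaj : ∀ y, 2 * S y ≤ T + (if y = b.K then b.C else -b.C)
  hV : b.V = T

lemma Inv.step {b : Bucket α} {S : α → ℝ} {T : ℝ} (h : Inv b S T) (y : α) (v : ℝ)
    (hv : 0 ≤ v) :
    Inv (b.step (y, v)) (fun z => S z + if y = z then v else 0) (T + v) := by
  obtain ⟨hC, hSnn, hKC, hMaj, hV⟩ := h
  unfold Bucket.step
  dsimp only
  split_ifs with h1 h2
  · refine ⟨?_, ?_, ?_, ?_, ?_⟩
    · show 0 ≤ b.C + v; linarith
    · intro z; have := hSnn z; split_ifs <;> linarith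
    · show b.C + v ≤ S b.K + _
      rw [if_pos h1]; linarith
    · intro z
      show 2 * (S z + if y = z then v else 0) ≤ T + v + (if z = b.K then b.C + v else -(b.C + v))
      have hmz := hMaj z
      have hsz := hSnn z; have hsy := hSnn y
      clear hMaj hSnn hKC
      split_ifs at hmz ⊢ <;> subst_vars <;> first | linarith | (exfalso; simp_all)
    · show b.V + v = T + v; linarith
  · refine ⟨?_, ?_, ?_, ?_, ?_⟩
    · show 0 ≤ v - b.C; linarith
    · intro z; have := hSnn z; split_ifs <;> linarith
    · show v - b.C ≤ S y + _
      rw [if_pos rfl]; have := hSnn y; linarith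
    · intro z
      show 2 * (S z + if y = z then v else 0) ≤ T + v + (if z = y then v - b.C else -(v - b.C))
      have hmz := hMaj z
      have hsz := hSnn z; have hsy := hSnn y
      clear hMaj hSnn hKC
      split_ifs at hmz ⊢ <;> subst_vars <;> first | linarith | (exfalso; simp_all)
    · show b.V + v = T + v; linarith
  · refine ⟨?_, ?_, ?_, ?_, ?_⟩
    · show 0 ≤ b.C - v; linarith
    · intro z; have := hSnn z; split_ifs <;> linarith
    · show b.C - v ≤ S b.K + _
      rw [if_neg h1]; linarith
    · intro z
      show 2 * (S z + if y = z then v else 0) ≤ T + v + (if z = b.K then b.C - v else -(b.C - v))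
      have hmz := hMaj z
      have hsz := hSnn z; have hsy := hSnn y
      clear hMaj hSnn hKC
      split_ifs at hmz ⊢ <;> subst_vars <;> first | linarith | (exfalso; simp_all)
    · show b.V + v = T + v; linarith

lemma Inv.fold : ∀ (l : List (α × ℝ)) (b : Bucket α) (S : α → ℝ) (T : ℝ),
    (∀ p ∈ l, 0 ≤ p.2) → Inv b S T →
    Inv (l.foldl Bucket.step b) (fun z => S z + flowSum z l) (T + (l.map Prod.snd).sum) := by
  intro l
  induction l with
  | nil => intro b S T _ h; simpa [flowSum_nil] using h
  | cons p t ih =>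
    intro b S T hv h
    have h1 : Inv (b.step (p.1, p.2)) (fun z => S z + if p.1 = z then p.2 else 0) (T + p.2) :=
      h.step p.1 p.2 (hv p List.mem_cons_self)
    rw [Prod.mk.eta] at h1
    have h2 := ih (b.step p) _ _ (fun q hq => hv q (List.mem_cons_of_mem _ hq)) h1
    have hfun : (fun z => (S z + if p.1 = z then p.2 else 0) + flowSum z t)
        = fun z => S z + flowSum z (p :: t) := by
      funext z
      rw [flowSum_cons]
      by_cases hz : p.1 = z
      · rw [if_pos hz]; ring
      · rw [if_neg hz]; ring
    have hT : (T + p.2) + (t.map Prod.snd).sum = T + ((p :: t).map Prod.snd).sum := by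
      simp; ring
    rw [hfun, hT] at h2
    exact h2

lemma runBucket_inv (k0 : α) (l : List (α × ℝ)) (hv : ∀ p ∈ l, 0 ≤ p.2) :
    Inv (runBucket k0 l) (fun z => flowSum z l) ((l.map Prod.snd).sum) := by
  have h0 : Inv (⟨0, k0, 0⟩ : Bucket α) (fun _ => 0) 0 :=
    ⟨le_refl 0, fun _ => le_refl 0, le_refl 0, fun y => by dsimp; split_ifs <;> norm_num, rfl⟩
  have := Inv.fold l ⟨0, k0, 0⟩ (fun _ => 0) 0 hv h0
  simpa [runBucket] using this

lemma flowSum_nonneg (k0 x : α) (l : List (α × ℝ)) (hv : ∀ p ∈ l, 0 ≤ p.2) :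
    0 ≤ flowSum x l :=
  (runBucket_inv k0 l hv).hSnn x

lemma Lx_nonneg (k0 x : α) (l : List (α × ℝ)) (hv : ∀ p ∈ l, 0 ≤ p.2) :
    0 ≤ (if (runBucket k0 l).K = x then (runBucket k0 l).C else 0) := by
  split_ifs
  · exact (runBucket_inv k0 l hv).hC
  · exact le_refl 0

lemma Lx_le (k0 x : α) (l : List (α × ℝ)) (hv : ∀ p ∈ l, 0 ≤ p.2) :
    (if (runBucket k0 l).K = x then (runBucket k0 l).C else 0) ≤ flowSum x l := by
  have h := runBucket_inv k0 l hv
  split_ifs with hK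
  · have := h.hKC
    rw [hK] at this
    exact this
  · exact flowSum_nonneg k0 x l hv

lemma det_gap (k0 x : α) (l : List (α × ℝ)) (hv : ∀ p ∈ l, 0 ≤ p.2) :
    flowSum x l - (if (runBucket k0 l).K = x then (runBucket k0 l).C else 0) ≤
      (l.map Prod.snd).sum - flowSum x l := by
  have h := runBucket_inv k0 l hv
  have hmx : 2 * flowSum x l ≤ (l.map Prod.snd).sum +
      (if x = (runBucket k0 l).K then (runBucket k0 l).C else -(runBucket k0 l).C) :=
    h.hMaj x
  have hC := h.hC
  by_cases hK : (runBucket k0 l).K = x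
  · rw [if_pos hK]
    rw [if_pos hK.symm] at hmx
    linarith
  · rw [if_neg hK]
    rw [if_neg (fun hh => hK hh.symm)] at hmx
    linarith

variable {β : Type*} [DecidableEq β]

lemma flowSum_filter (x : α) (h : α → β) (l : List (α × ℝ)) :
    flowSum x (l.filter fun p => h p.1 = h x) = flowSum x l := by
  induction l with
  | nil => rfl
  | cons p t ih =>
    by_cases hp : p.1 = x
    · have hc : h p.1 = h x := congrArg h hp
      simp [flowSum, List.filter_cons, List.filter_filter, hp, hc] at ih ⊢
      linarith [ih]
    · by_cases hc : h p.1 = h x <;>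
      · simp [flowSum, List.filter_cons, List.filter_filter, hp, hc] at ih ⊢
        linarith [ih]

def excess (x : α) (h : α → β) (l : List (α × ℝ)) : ℝ :=
  ((l.filter fun p => ¬(p.1 = x) ∧ h p.1 = h x).map Prod.snd).sum

lemma total_filter (x : α) (h : α → β) (l : List (α × ℝ)) :
    (((l.filter fun p => h p.1 = h x).map Prod.snd)).sum = flowSum x l + excess x h l := by
  induction l with
  | nil => simp [flowSum, excess]
  | cons p t ih =>
    by_cases hp : p.1 = x
    · have hc : h p.1 = h x := congrArg h hp
      simp [flowSum, excess, List.filter_cons, List.filter_filter, hp, hc] at ih ⊢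
      linarith [ih]
    · by_cases hc : h p.1 = h x <;>
      · simp [flowSum, excess, List.filter_cons, List.filter_filter, hp, hc] at ih ⊢
        linarith [ih]

lemma filter_map_sum {M : Type*} [AddCommMonoid M] (l : List α) (c : α → Prop)
    [DecidablePred c] (f : α → M) :
    ((l.filter c).map f).sum = (l.map (fun b => if c b then f b else 0)).sum := by
  induction l with
  | nil => simp
  | cons a t ih =>
    by_cases hc : c a <;> simp [List.filter_cons, hc, ih]

end MVAux

namespace MVAux3

variable {Ω : Type*} [MeasurableSpace Ω] {μ : Measure Ω} [IsProbabilityMeasure μ]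

lemma nullMeasurableSet_of_compl_le (s : Set Ω) (h : μ s + μ sᶜ ≤ 1) :
    NullMeasurableSet s μ := by
  set E := toMeasurable μ s with hE
  set F := toMeasurable μ sᶜ with hF
  have hmE : MeasurableSet E := measurableSet_toMeasurable μ s
  have hmF : MeasurableSet F := measurableSet_toMeasurable μ sᶜ
  have hsE : s ⊆ E := subset_toMeasurable μ s
  have hsF : sᶜ ⊆ F := subset_toMeasurable μ sᶜ
  have hμE : μ E = μ s := measure_toMeasurable s
  have hμF : μ F = μ sᶜ := measure_toMeasurable sᶜ
  have hunion : μ (E ∪ F) = 1 := by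
    have : E ∪ F = Set.univ := by
      apply Set.eq_univ_of_univ_subset
      intro ω _
      by_cases hω : ω ∈ s
      · exact Or.inl (hsE hω)
      · exact Or.inr (hsF hω)
    rw [this, measure_univ]
  have hinter : μ (E ∩ F) = 0 := by
    have hadd : μ (E ∪ F) + μ (E ∩ F) = μ E + μ F := measure_union_add_inter' hmE F
    rw [hunion, hμE, hμF] at hadd
    have h1 : 1 + μ (E ∩ F) ≤ 1 + 0 := by
      rw [hadd, add_zero]; exact h
    have := ENNReal.le_of_add_le_add_left (by simp : (1 : ℝ≥0∞) ≠ ⊤) h1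
    exact le_antisymm this zero_le
  refine (hmF.compl.nullMeasurableSet).congr ?_
  rw [Filter.eventuallyEq_set]
  have h1 : μ (Fᶜ \ s) = 0 := by
    have : Fᶜ \ s = ∅ := by
      ext ω; simp only [Set.mem_diff, Set.mem_compl_iff, Set.mem_empty_iff_false, iff_false]
      rintro ⟨hωF, hωs⟩
      exact hωF (hsF hωs)
    simp [this]
  have h2 : μ (s \ Fᶜ) = 0 := by
    refine measure_mono_null ?_ hinter
    intro ω ⟨hωs, hωF⟩
    exact ⟨hsE hωs, Classical.not_not.mp (fun hh => hωF hh)⟩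
  have := measure_union_null h1 h2
  filter_upwards [measure_eq_zero_iff_ae_notMem.mp this] with ω hω
  simp only [Set.mem_union, Set.mem_diff, Set.mem_compl_iff] at hω
  simp only [Set.mem_compl_iff]
  tauto

lemma ofReal_list_sum_le (l : List ℝ) :
    ENNReal.ofReal l.sum ≤ (l.map ENNReal.ofReal).sum := by
  induction l with
  | nil => simp
  | cons a t ih =>
    simp only [List.sum_cons, List.map_cons]
    exact le_trans ENNReal.ofReal_add_le (by gcongr)

lemma list_sum_ofReal_eq (l : List ℝ) (h : ∀ a ∈ l, 0 ≤ a) :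
    (l.map ENNReal.ofReal).sum = ENNReal.ofReal l.sum := by
  induction l with
  | nil => simp
  | cons a t ih =>
    simp only [List.sum_cons, List.map_cons]
    rw [ih (fun b hb => h b (List.mem_cons_of_mem _ hb)),
      ENNReal.ofReal_add (h a List.mem_cons_self) (List.sum_nonneg fun b hb =>
        h b (List.mem_cons_of_mem _ hb))]

lemma swap_finset_list {β γ : Type*} (s : Finset γ) (l : List β) (f : β → γ → ℝ≥0∞) :
    ∑ c ∈ s, (l.map (fun b => f b c)).sum = (l.map (fun b => ∑ c ∈ s, f b c)).sum := by
  induction l with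
  | nil => simp
  | cons a t ih =>
    simp only [List.map_cons, List.sum_cons, Finset.sum_add_distrib, ih]

end MVAux3

namespace MVRow
open MVAux MVAux3

variable {Ω : Type*} [MeasurableSpace Ω] (μ : Measure Ω) [IsProbabilityMeasure μ]
variable {n w : ℕ} (G : Ω → Fin n → Fin w)

def cell (h : Fin n → Fin w) : Set Ω := {ω | (fun y => G ω y) = h}

variable (hw : 0 < w)
  (huniform : ∀ y j, μ {ω | G ω y = j} = ENNReal.ofReal (1 / (w : ℝ)))

section
include hw huniform

lemma nm_basic (y : Fin n) (j : Fin w) : NullMeasurableSet {ω | G ω y = j} μ := by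
  apply nullMeasurableSet_of_compl_le
  have hsub : {ω | G ω y = j}ᶜ ⊆ ⋃ j' ∈ Finset.univ.erase j, {ω | G ω y = j'} := by
    intro ω hω
    simp only [Set.mem_compl_iff, Set.mem_setOf_eq] at hω
    refine Set.mem_biUnion (Finset.mem_erase.2 ⟨hω, Finset.mem_univ _⟩) rfl
  have hc : μ ({ω | G ω y = j}ᶜ) ≤ (w - 1 : ℕ) * ENNReal.ofReal (1 / (w : ℝ)) := by
    refine le_trans (measure_mono hsub) (le_trans (measure_biUnion_finset_le _ _) ?_)
    rw [Finset.sum_congr rfl (fun j' _ => huniform y j')]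
    simp [Finset.card_erase_of_mem]
  calc μ {ω | G ω y = j} + μ ({ω | G ω y = j}ᶜ)
      ≤ ENNReal.ofReal (1 / (w : ℝ)) + (w - 1 : ℕ) * ENNReal.ofReal (1 / (w : ℝ)) := by
        rw [huniform]; exact add_le_add_right hc _
    _ = (w : ℝ≥0∞) * ENNReal.ofReal (1 / (w : ℝ)) := by
        have hww : (w : ℝ≥0∞) = 1 + ((w - 1 : ℕ) : ℝ≥0∞) := by
          rw [← Nat.cast_one, ← Nat.cast_add]
          congr 1
          omega
        rw [hww, add_mul, one_mul]
    _ = 1 := by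
        rw [← ENNReal.ofReal_natCast w, ← ENNReal.ofReal_mul (by positivity)]
        rw [mul_one_div, div_self (by exact_mod_cast hw.ne' : (w : ℝ) ≠ 0)]
        simp

lemma nm_cell (h : Fin n → Fin w) : NullMeasurableSet (cell G h) μ := by
  have : cell G h = ⋂ y, {ω | G ω y = h y} := by
    ext ω
    simp only [cell, Set.mem_setOf_eq, Set.mem_iInter]
    constructor
    · intro hh y; exact congrFun hh y
    · intro hh; funext y; exact hh y
  rw [this]
  exact NullMeasurableSet.iInter fun y => nm_basic μ G hw huniform y (h y)

lemma cell_disjoint : Pairwise (Function.onFun Disjoint (cell G)) := by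
  intro h h' hne
  rw [Function.onFun, Set.disjoint_left]
  intro ω hω hω'
  exact hne (hω.symm.trans hω')

lemma sum_cells (A : Finset (Fin n → Fin w)) :
    μ (⋃ h ∈ A, cell G h) = ∑ h ∈ A, μ (cell G h) := by
  refine measure_biUnion_finset₀ ?_ (fun h _ => nm_cell μ G hw huniform h)
  intro h _ h' _ hne
  exact ((cell_disjoint μ G hw huniform) hne).aedisjoint

variable (hpair : ∀ (y z : Fin n), y ≠ z → ∀ j j',
      μ {ω | G ω y = j ∧ G ω z = j'} = μ {ω | G ω y = j} * μ {ω | G ω z = j'})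

include hpair

lemma coll_meas (x y : Fin n) (hyx : y ≠ x) :
    μ {ω | G ω y = G ω x} = ENNReal.ofReal (1 / (w : ℝ)) := by
  have hdecomp : {ω | G ω y = G ω x} =
      ⋃ j ∈ (Finset.univ : Finset (Fin w)), ({ω | G ω y = j} ∩ {ω | G ω x = j}) := by
    ext ω
    simp only [Set.mem_setOf_eq, Set.mem_iUnion, Set.mem_inter_iff, Finset.mem_univ,
      exists_true_left]
    constructor
    · intro hh; exact ⟨G ω x, hh, rfl⟩
    · rintro ⟨j, h1, h2⟩; rw [h1, h2]
  rw [hdecomp, measure_biUnion_finset₀ ?disj ?nm]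
  case disj =>
    intro j _ j' _ hne
    refine Disjoint.aedisjoint ?_
    rw [Set.disjoint_left]
    rintro ω ⟨-, h2⟩ ⟨-, h4⟩
    rw [Set.mem_setOf_eq] at h2 h4
    exact hne (h2 ▸ h4 ▸ rfl)
  case nm =>
    intro j _
    exact (nm_basic μ G hw huniform y j).inter (nm_basic μ G hw huniform x j)
  have hterm : ∀ j : Fin w, μ ({ω | G ω y = j} ∩ {ω | G ω x = j}) =
      ENNReal.ofReal (1 / (w : ℝ)) * ENNReal.ofReal (1 / (w : ℝ)) := by
    intro j
    rw [← Set.setOf_and, hpair y x hyx j j, huniform, huniform]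
  rw [Finset.sum_congr rfl (fun j _ => hterm j), Finset.sum_const, Finset.card_univ,
    Fintype.card_fin, nsmul_eq_mul, ← ENNReal.ofReal_natCast,
    ← ENNReal.ofReal_mul (by positivity), ← ENNReal.ofReal_mul (by positivity)]
  congr 1
  have : (w : ℝ) ≠ 0 := by exact_mod_cast hw.ne'
  field_simp

lemma sum_cells_coll (x y : Fin n) (hyx : y ≠ x) :
    ∑ h ∈ Finset.univ.filter (fun h : Fin n → Fin w => h y = h x), μ (cell G h)
      = ENNReal.ofReal (1 / (w : ℝ)) := by
  rw [← sum_cells μ G hw huniform]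
  rw [← coll_meas μ G hw huniform hpair x y hyx]
  congr 1
  ext ω
  simp only [Set.mem_iUnion, Finset.mem_filter, Finset.mem_univ, true_and,
    cell, Set.mem_setOf_eq]
  constructor
  · rintro ⟨h, hh, rfl⟩; exact hh
  · intro hh; exact ⟨fun z => G ω z, hh, rfl⟩

lemma row_markov (l : List (Fin n × ℝ)) (hv : ∀ p ∈ l, 0 ≤ p.2) (x : Fin n)
    (a : ℝ) (ha : 0 < a)
    (hhalf : (l.map Prod.snd).sum * (1 / (w : ℝ)) ≤ a * (1 / 2)) :
    μ {ω | a ≤ MVAux.excess x (fun y => G ω y) l} ≤ ENNReal.ofReal (1 / 2) := by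
  classical
  set m : (Fin n → Fin w) → ℝ≥0∞ := fun h => μ (cell G h) with hm
  set badA : Finset (Fin n → Fin w) :=
    Finset.univ.filter (fun h => a ≤ MVAux.excess x h l) with hbadA
  set Q : (Fin n → Fin w) → Fin n × ℝ → ℝ≥0∞ :=
    fun h p => if ¬(p.1 = x) ∧ h p.1 = h x then ENNReal.ofReal p.2 else 0 with hQ
  have hsub : {ω | a ≤ MVAux.excess x (fun y => G ω y) l} ⊆
      ⋃ h ∈ badA, cell G h := by
    intro ω hω
    exact Set.mem_biUnion (Finset.mem_filter.2 ⟨Finset.mem_univ _, hω⟩) rfl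
  have h1 : μ {ω | a ≤ MVAux.excess x (fun y => G ω y) l} ≤ ∑ h ∈ badA, m h :=
    le_trans (measure_mono hsub) (le_of_eq (sum_cells μ G hw huniform badA))
  have hex : ∀ h : Fin n → Fin w,
      ENNReal.ofReal (MVAux.excess x h l) ≤ (l.map (Q h)).sum := by
    intro h
    refine le_trans (ofReal_list_sum_le _) (le_of_eq ?_)
    rw [List.map_map]
    simp only [Function.comp_def]
    exact MVAux.filter_map_sum l _ _
  have hitem : ∀ p ∈ l, ∑ h : Fin n → Fin w, Q h p * m h ≤
      ENNReal.ofReal p.2 * ENNReal.ofReal (1 / (w : ℝ)) := by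
    intro p _
    by_cases hx : p.1 = x
    · have : ∀ h : Fin n → Fin w, Q h p * m h = 0 := by
        intro h; rw [hQ]; simp [hx]
      rw [Finset.sum_congr rfl (fun h _ => this h)]
      simp
    · have heq : ∀ h : Fin n → Fin w, Q h p * m h =
          if h p.1 = h x then ENNReal.ofReal p.2 * m h else 0 := by
        intro h
        rw [hQ]
        by_cases hc : h p.1 = h x <;> simp [hx, hc]
      rw [Finset.sum_congr rfl (fun h _ => heq h), Finset.sum_ite, Finset.sum_const,
        Finset.sum_filter, ← Finset.sum_filter, ← Finset.mul_sum]
      simp only [smul_zero, add_zero]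
      rw [sum_cells_coll μ G hw huniform hpair x p.1 hx]
  have key : ENNReal.ofReal a * ∑ h ∈ badA, m h ≤
      ENNReal.ofReal a * ENNReal.ofReal (1 / 2) := by
    calc ENNReal.ofReal a * ∑ h ∈ badA, m h
        = ∑ h ∈ badA, ENNReal.ofReal a * m h := Finset.mul_sum _ _ _
      _ ≤ ∑ h ∈ badA, ENNReal.ofReal (MVAux.excess x h l) * m h := by
          refine Finset.sum_le_sum fun h hh => ?_
          exact mul_le_mul_left (ENNReal.ofReal_le_ofReal
            (Finset.mem_filter.1 hh).2) _
      _ ≤ ∑ h : Fin n → Fin w, ENNReal.ofReal (MVAux.excess x h l) * m h :=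
          Finset.sum_le_sum_of_subset (Finset.subset_univ _)
      _ ≤ ∑ h : Fin n → Fin w, (l.map (fun p => Q h p * m h)).sum := by
          refine Finset.sum_le_sum fun h _ => ?_
          rw [List.sum_map_mul_right]
          exact mul_le_mul_left (hex h) _
      _ = (l.map (fun p => ∑ h : Fin n → Fin w, Q h p * m h)).sum :=
          swap_finset_list _ _ _
      _ ≤ (l.map (fun p => ENNReal.ofReal p.2 * ENNReal.ofReal (1 / (w : ℝ)))).sum := by
          refine List.sum_le_sum ?_
          intro p hp
          exact hitem p hp
      _ = (l.map (fun p : Fin n × ℝ => ENNReal.ofReal p.2)).sum *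
            ENNReal.ofReal (1 / (w : ℝ)) := List.sum_map_mul_right _ _ _
      _ ≤ ENNReal.ofReal a * ENNReal.ofReal (1 / 2) := by
          have : (l.map (fun p : Fin n × ℝ => ENNReal.ofReal p.2)).sum =
              ENNReal.ofReal ((l.map Prod.snd).sum) := by
            have := list_sum_ofReal_eq (l.map Prod.snd)
              (fun b hb => by
                obtain ⟨q, hq, rfl⟩ := List.mem_map.1 hb
                exact hv q hq)
            rw [← this, List.map_map]
            rfl
          rw [this, ← ENNReal.ofReal_mul (List.sum_nonneg fun b hb => by
              obtain ⟨q, hq, rfl⟩ := List.mem_map.1 hb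
              exact hv q hq),
            ← ENNReal.ofReal_mul ha.le]
          exact ENNReal.ofReal_le_ofReal hhalf
  have hcancel := (ENNReal.mul_le_mul_iff_right
    (by simp [ENNReal.ofReal_eq_zero]; linarith : ENNReal.ofReal a ≠ 0)
    ENNReal.ofReal_ne_top).1 key
  exact le_trans h1 hcancel

end
end MVRow

/-- Lower-bound estimate of MV-Sketch: with `r = log₂(1/δ)` rows, `w = 2/ε`
buckets per row, independent rows and pairwise-independent uniform hashes,
the lower-bound estimate `L(x) = max_i L_i(x)` (where `L_i(x) = C` of the
hashed bucket if its key equals `x`, else `0`) always satisfies `L(x) ≤ S(x)`,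
and moreover `S(x) − L(x) ≤ ε𝒮` with probability at least `1 − δ`. -/
theorem lower_bound_estimate {Ω : Type*} [MeasurableSpace Ω]
    (μ : Measure Ω) [IsProbabilityMeasure μ]
    (n r w : ℕ) (hr : 0 < r) (hw : 0 < w)
    (ε δ : ℝ) (hε0 : 0 < ε) (hε1 : ε < 1)
    (hδ : δ = (1 / 2 : ℝ) ^ r) (hwε : (w : ℝ) = 2 / ε)
    (l : List (Fin n × ℝ)) (hv : ∀ p ∈ l, 0 ≤ p.2) (k0 x : Fin n)
    (g : Ω → Fin r → Fin n → Fin w)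
    (hrows : iIndepFun (fun i ω => g ω i) μ)
    (huniform : ∀ i y j, μ {ω | g ω i y = j} = ENNReal.ofReal (1 / (w : ℝ)))
    (hpair : ∀ (i : Fin r) (y z : Fin n), y ≠ z → ∀ j j',
      μ {ω | g ω i y = j ∧ g ω i z = j'} =
        μ {ω | g ω i y = j} * μ {ω | g ω i z = j'}) :
    haveI : Nonempty (Fin r) := Fin.pos_iff_nonempty.mp hr
    (∀ ω : Ω,
      Finset.univ.sup' Finset.univ_nonempty (fun i : Fin r =>
        if (runBucket k0 (l.filter fun p => g ω i p.1 = g ω i x)).K = x then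
          (runBucket k0 (l.filter fun p => g ω i p.1 = g ω i x)).C
        else 0) ≤ flowSum x l) ∧
    ENNReal.ofReal (1 - δ) ≤
      μ {ω |
        flowSum x l -
          Finset.univ.sup' Finset.univ_nonempty (fun i : Fin r =>
            if (runBucket k0 (l.filter fun p => g ω i p.1 = g ω i x)).K = x then
              (runBucket k0 (l.filter fun p => g ω i p.1 = g ω i x)).C
            else 0) ≤ ε * (l.map Prod.snd).sum} := by
  classical
  have hne : Nonempty (Fin r) := Fin.pos_iff_nonempty.mp hr
  -- basic facts about the filtered streams
  have hvf : ∀ (ω : Ω) (i : Fin r), ∀ p ∈ l.filter fun p => g ω i p.1 = g ω i x, 0 ≤ p.2 :=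
    fun ω i p hp => hv p (List.mem_of_mem_filter hp)
  -- part 1 pointwise bound
  have hL_le : ∀ (ω : Ω) (i : Fin r),
      (if (runBucket k0 (l.filter fun p => g ω i p.1 = g ω i x)).K = x then
          (runBucket k0 (l.filter fun p => g ω i p.1 = g ω i x)).C else 0) ≤ flowSum x l := by
    intro ω i
    have := MVAux.Lx_le k0 x (l.filter fun p => g ω i p.1 = g ω i x) (hvf ω i)
    rwa [MVAux.flowSum_filter x (g ω i) l] at this
  have hL_nonneg : ∀ (ω : Ω) (i : Fin r),
      0 ≤ (if (runBucket k0 (l.filter fun p => g ω i p.1 = g ω i x)).K = x then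
          (runBucket k0 (l.filter fun p => g ω i p.1 = g ω i x)).C else 0) :=
    fun ω i => MVAux.Lx_nonneg k0 x _ (hvf ω i)
  -- gap bound: flowSum x l - L_i ≤ excess
  have hgap : ∀ (ω : Ω) (i : Fin r),
      flowSum x l - (if (runBucket k0 (l.filter fun p => g ω i p.1 = g ω i x)).K = x then
          (runBucket k0 (l.filter fun p => g ω i p.1 = g ω i x)).C else 0) ≤
        MVAux.excess x (g ω i) l := by
    intro ω i
    have h1 := MVAux.det_gap k0 x (l.filter fun p => g ω i p.1 = g ω i x) (hvf ω i)
    rw [MVAux.flowSum_filter x (g ω i) l, MVAux.total_filter x (g ω i) l] at h1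
    linarith
  refine ⟨fun ω => Finset.sup'_le _ _ fun i _ => hL_le ω i, ?_⟩
  -- total sum is nonnegative
  have hSnn : 0 ≤ (l.map Prod.snd).sum :=
    List.sum_nonneg fun b hb => by
      obtain ⟨q, hq, rfl⟩ := List.mem_map.1 hb
      exact hv q hq
  have hδ0 : 0 ≤ δ := by rw [hδ]; positivity
  have hδ1 : δ ≤ 1 := by
    rw [hδ]
    exact pow_le_one₀ (by norm_num) (by norm_num)
  by_cases hS0 : (l.map Prod.snd).sum ≤ 0
  · -- degenerate case: total sum is zero
    have hgood : {ω : Ω |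
        flowSum x l -
          Finset.univ.sup' Finset.univ_nonempty (fun i : Fin r =>
            if (runBucket k0 (l.filter fun p => g ω i p.1 = g ω i x)).K = x then
              (runBucket k0 (l.filter fun p => g ω i p.1 = g ω i x)).C
            else 0) ≤ ε * (l.map Prod.snd).sum} = Set.univ := by
      apply Set.eq_univ_of_forall
      intro ω
      simp only [Set.mem_setOf_eq]
      have hS : (l.map Prod.snd).sum = 0 := le_antisymm hS0 hSnn
      have hfl : flowSum x l ≤ 0 := by
        rw [← hS, flowSum]
        refine List.Sublist.sum_le_sum ((List.filter_sublist).map Prod.snd) ?_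
        intro b hb
        obtain ⟨q, hq, rfl⟩ := List.mem_map.1 hb
        exact hv q hq
      have hsup : 0 ≤ Finset.univ.sup' Finset.univ_nonempty (fun i : Fin r =>
          if (runBucket k0 (l.filter fun p => g ω i p.1 = g ω i x)).K = x then
            (runBucket k0 (l.filter fun p => g ω i p.1 = g ω i x)).C
          else 0) :=
        le_trans (hL_nonneg ω (Classical.arbitrary _))
          (Finset.le_sup' (fun i : Fin r =>
            if (runBucket k0 (l.filter fun p => g ω i p.1 = g ω i x)).K = x then
              (runBucket k0 (l.filter fun p => g ω i p.1 = g ω i x)).C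
            else 0) (Finset.mem_univ (Classical.arbitrary _)))
      rw [hS, mul_zero]
      linarith
    rw [hgood, measure_univ]
    calc ENNReal.ofReal (1 - δ) ≤ ENNReal.ofReal 1 :=
          ENNReal.ofReal_le_ofReal (by linarith)
      _ = 1 := ENNReal.ofReal_one
  · push_neg at hS0
    set S := (l.map Prod.snd).sum with hSdef
    set a := ε * S with hadef
    have ha : 0 < a := mul_pos hε0 hS0
    -- the bad events
    set bad : Fin r → Set Ω := fun i =>
      (fun ω => g ω i) ⁻¹' {h : Fin n → Fin w | a ≤ MVAux.excess x h l} with hbad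
    have hwne : (w : ℝ) ≠ 0 := by exact_mod_cast hw.ne'
    have hhalf : S * (1 / (w : ℝ)) ≤ a * (1 / 2) := by
      have h1 : (1 : ℝ) / (w : ℝ) = ε / 2 := by
        rw [hwε]; field_simp
      rw [h1, hadef]
      exact le_of_eq (by ring)
    have hrow : ∀ i : Fin r, μ (bad i) ≤ ENNReal.ofReal (1 / 2) := by
      intro i
      exact MVRow.row_markov μ (fun ω => g ω i) hw (huniform i) (hpair i) l hv x a ha hhalf
    -- independence across rows
    have hprod : μ (⋂ i ∈ (Finset.univ : Finset (Fin r)), bad i) ≤ ENNReal.ofReal δ := by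
      have hind := hrows.measure_inter_preimage_eq_mul (Finset.univ : Finset (Fin r))
        (sets := fun _ => {h : Fin n → Fin w | a ≤ MVAux.excess x h l})
        (fun i _ => MeasurableSet.of_discrete)
      calc μ (⋂ i ∈ (Finset.univ : Finset (Fin r)), bad i)
          = ∏ i : Fin r, μ (bad i) := hind
        _ ≤ ∏ _i : Fin r, ENNReal.ofReal (1 / 2) :=
            Finset.prod_le_prod' fun i _ => hrow i
        _ = ENNReal.ofReal (1 / 2) ^ r := by
            rw [Finset.prod_const, Finset.card_univ, Fintype.card_fin]
        _ = ENNReal.ofReal ((1 / 2 : ℝ) ^ r) := by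
            rw [ENNReal.ofReal_pow (by norm_num)]
        _ = ENNReal.ofReal δ := by rw [hδ]
    -- the good event contains the complement of the intersection of bad events
    have hsubset : (⋂ i ∈ (Finset.univ : Finset (Fin r)), bad i)ᶜ ⊆
        {ω : Ω |
          flowSum x l -
            Finset.univ.sup' Finset.univ_nonempty (fun i : Fin r =>
              if (runBucket k0 (l.filter fun p => g ω i p.1 = g ω i x)).K = x then
                (runBucket k0 (l.filter fun p => g ω i p.1 = g ω i x)).C
              else 0) ≤ ε * (l.map Prod.snd).sum} := by
      intro ω hω
      simp only [Set.mem_compl_iff, Set.mem_iInter, not_forall] at hω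
      obtain ⟨i, -, hi⟩ := hω
      have hlt : MVAux.excess x (g ω i) l < a := by
        by_contra hcon
        exact hi (le_of_not_gt hcon)
      have h1 := hgap ω i
      have h2 : (if (runBucket k0 (l.filter fun p => g ω i p.1 = g ω i x)).K = x then
            (runBucket k0 (l.filter fun p => g ω i p.1 = g ω i x)).C else 0) ≤
          Finset.univ.sup' Finset.univ_nonempty (fun i : Fin r =>
            if (runBucket k0 (l.filter fun p => g ω i p.1 = g ω i x)).K = x then
              (runBucket k0 (l.filter fun p => g ω i p.1 = g ω i x)).C
            else 0) :=
        Finset.le_sup' (fun i : Fin r =>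
            if (runBucket k0 (l.filter fun p => g ω i p.1 = g ω i x)).K = x then
              (runBucket k0 (l.filter fun p => g ω i p.1 = g ω i x)).C
            else 0) (Finset.mem_univ i)
      simp only [Set.mem_setOf_eq]
      have : flowSum x l - Finset.univ.sup' Finset.univ_nonempty (fun i : Fin r =>
          if (runBucket k0 (l.filter fun p => g ω i p.1 = g ω i x)).K = x then
            (runBucket k0 (l.filter fun p => g ω i p.1 = g ω i x)).C
          else 0) < a := by linarith
      rw [hadef] at this
      exact le_of_lt this
    -- conclude
    refine le_trans ?_ (measure_mono hsubset)
    have hcompl : (1 : ℝ≥0∞) ≤ μ ((⋂ i ∈ (Finset.univ : Finset (Fin r)), bad i)ᶜ) +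
        ENNReal.ofReal δ := by
      calc (1 : ℝ≥0∞) = μ Set.univ := measure_univ.symm
        _ ≤ μ ((⋂ i ∈ (Finset.univ : Finset (Fin r)), bad i)ᶜ ∪
              (⋂ i ∈ (Finset.univ : Finset (Fin r)), bad i)) := by
            refine measure_mono ?_
            rw [Set.compl_union_self]
        _ ≤ μ ((⋂ i ∈ (Finset.univ : Finset (Fin r)), bad i)ᶜ) +
              μ (⋂ i ∈ (Finset.univ : Finset (Fin r)), bad i) := measure_union_le _ _
        _ ≤ _ := add_le_add_right hprod _
    rw [ENNReal.ofReal_sub 1 hδ0, ENNReal.ofReal_one]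
    exact tsub_le_iff_right.mpr hcompl
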